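/- Let ζ = 1 − e^{−1}. Then the sequence 1 − (1 − ζ^{2⌈N^{1/2}⌉})^{⌊e^{N^{1/2}} N^{−2}⌋ / (2⌈N^{1/2}⌉)} converges to 1 as N → +∞. -/

import Mathlib

open Real Filter

private lemma tendsto_sqrt_nat : Tendsto (fun N : ℕ => Real.sqrt N) atTop atTop := by
  rw [tendsto_atTop_atTop]
  intro b
  refine ⟨⌈b * b⌉₊, fun N hN => ?_⟩
  rcases le_or_gt b 0 with hb | hb
  · exact hb.trans (Real.sqrt_nonneg _)
  · rw [show b = Real.sqrt (b * b) by rw [Real.sqrt_mul_self hb.le]]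
    apply Real.sqrt_le_sqrt
    exact (Nat.le_ceil _).trans (Nat.cast_le.2 hN)

private lemma zeta_pos : (0:ℝ) < 1 - Real.exp (-1) := by
  have := Real.exp_lt_one_iff.mpr (show (-1:ℝ) < 0 by norm_num)
  linarith

private lemma zeta_lt_one : (1:ℝ) - Real.exp (-1) < 1 := by
  have := Real.exp_pos (-1:ℝ); linarith

private lemma c_pos : 0 < 1 + 2 * Real.log (1 - Real.exp (-1)) := by
  have h1 : Real.exp (-(1:ℝ)/2) < 1 - Real.exp (-1) := by
    have he : (2.7182818283 : ℝ) < Real.exp 1 := Real.exp_one_gt_d9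
    have hhalf : (1.64 : ℝ) < Real.exp (1/2) := by
      have h2 : Real.exp (1/2) * Real.exp (1/2) = Real.exp 1 := by
        rw [← Real.exp_add]; norm_num
      nlinarith [Real.exp_pos (1/2 : ℝ)]
    have hne : Real.exp (-(1:ℝ)/2) = (Real.exp (1/2))⁻¹ := by
      rw [← Real.exp_neg]; norm_num
    have hn1 : Real.exp (-1 : ℝ) = (Real.exp 1)⁻¹ := Real.exp_neg 1
    rw [hne, hn1]
    have hp2 : (0:ℝ) < Real.exp (1/2) := Real.exp_pos _
    have hp1 : (0:ℝ) < Real.exp 1 := Real.exp_pos _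
    have ha : (Real.exp (1/2))⁻¹ < 1/1.64 := by
      rw [inv_lt_iff_one_lt_mul₀ hp2]; nlinarith
    have hb : (Real.exp 1)⁻¹ < 1/2.71 := by
      rw [inv_lt_iff_one_lt_mul₀ hp1]; nlinarith
    nlinarith
  have h2 := Real.log_lt_log (Real.exp_pos _) h1
  rw [Real.log_exp] at h2
  linarith

/-- With `ζ = 1 - e⁻¹`,
`1 - (1 - ζ^{2⌈√N⌉})^{⌊e^{√N} N⁻²⌋ / (2⌈√N⌉)} → 1` as `N → ∞`. -/
theorem tendsto_coupling_bound :
    Tendsto (fun N : ℕ =>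
        1 - ((1 : ℝ) - (1 - Real.exp (-1)) ^ (2 * ⌈Real.sqrt N⌉₊)) ^
          ((⌊Real.exp (Real.sqrt N) * (N : ℝ) ^ (-2 : ℤ)⌋₊ : ℝ) /
            (2 * (⌈Real.sqrt N⌉₊ : ℝ))))
      atTop (nhds 1) := by
  set ζ : ℝ := 1 - Real.exp (-1) with hζ
  set c : ℝ := 1 + 2 * Real.log ζ with hc
  have hζ0 : 0 < ζ := zeta_pos
  have hζ1 : ζ < 1 := zeta_lt_one
  have hc0 : 0 < c := c_pos
  set r : ℕ → ℝ := fun N =>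
    (⌊Real.exp (Real.sqrt N) * (N : ℝ) ^ (-2 : ℤ)⌋₊ : ℝ) / (2 * (⌈Real.sqrt N⌉₊ : ℝ))
    with hr
  have hrnn : ∀ N, 0 ≤ r N := fun N =>
    div_nonneg (Nat.cast_nonneg _) (by positivity)
  -- Step 2: the product r N * ζ ^ (2⌈√N⌉) → ∞
  have hprod : Tendsto (fun N : ℕ => r N * ζ ^ (2 * ⌈Real.sqrt N⌉₊)) atTop atTop := by
    have hg : Tendsto (fun N : ℕ =>
        Real.exp (c * Real.sqrt N) * ζ ^ 2 / (8 * Real.sqrt N ^ 5)) atTop atTop := by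
      have h1 : Tendsto (fun t : ℝ => Real.exp (c * t) * ζ ^ 2 / (8 * t ^ 5)) atTop atTop := by
        have h2 : Tendsto (fun t : ℝ => Real.exp t / t ^ 5) atTop atTop :=
          tendsto_exp_div_pow_atTop 5
        have h3 : Tendsto (fun t : ℝ => c * t) atTop atTop :=
          tendsto_id.const_mul_atTop hc0
        have h4 : Tendsto (fun t : ℝ => Real.exp (c * t) / (c * t) ^ 5) atTop atTop :=
          h2.comp h3
        have h5 : Tendsto (fun t : ℝ =>
            (Real.exp (c * t) / (c * t) ^ 5) * (c ^ 5 * ζ ^ 2 / 8)) atTop atTop :=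
          h4.atTop_mul_const (by positivity)
        apply h5.congr'
        filter_upwards [eventually_gt_atTop 0] with t ht
        have hc5 : c ^ 5 ≠ 0 := by positivity
        field_simp
      exact h1.comp tendsto_sqrt_nat
    apply tendsto_atTop_mono' _ _ hg
    have hev1 : ∀ᶠ N : ℕ in atTop, (1:ℝ) ≤ Real.sqrt N :=
      tendsto_sqrt_nat.eventually_ge_atTop 1
    have hev2 : ∀ᶠ N : ℕ in atTop, (2:ℝ) ≤ Real.exp (Real.sqrt N) / Real.sqrt N ^ 4 :=
      ((tendsto_exp_div_pow_atTop 4).comp tendsto_sqrt_nat).eventually_ge_atTop 2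
    filter_upwards [hev1, hev2] with N ht1 ht2
    set t : ℝ := Real.sqrt N with htdef
    have ht0 : 0 < t := lt_of_lt_of_le one_pos ht1
    have htsq : t ^ 2 = (N : ℝ) := Real.sq_sqrt (Nat.cast_nonneg N)
    have hNz : Real.exp t * (N : ℝ) ^ (-2 : ℤ) = Real.exp t / t ^ 4 := by
      rw [zpow_neg, ← htsq, show ((t^2 : ℝ) ^ (2:ℤ)) = t ^ 4 by
        rw [zpow_two]; ring, div_eq_mul_inv]
    have hfl : Real.exp t / t ^ 4 / 2 ≤ (⌊Real.exp t * (N : ℝ) ^ (-2 : ℤ)⌋₊ : ℝ) := by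
      rw [hNz]
      have h := (Nat.sub_one_lt_floor (Real.exp t / t ^ 4)).le
      have ht2' : (2:ℝ) ≤ Real.exp t / t ^ 4 := ht2
      linarith
    have hcl : (⌈t⌉₊ : ℝ) ≤ 2 * t := by
      have := (Nat.ceil_lt_add_one ht0.le).le
      linarith
    have hclpos : (0:ℝ) < (⌈t⌉₊ : ℝ) := by
      exact_mod_cast Nat.ceil_pos.2 ht0
    have hpow : ζ ^ ((2:ℝ) * t + 2) ≤ ζ ^ (2 * ⌈t⌉₊) := by
      rw [← Real.rpow_natCast ζ (2 * ⌈t⌉₊)]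
      apply Real.rpow_le_rpow_of_exponent_ge hζ0 hζ1.le
      push_cast
      have := (Nat.ceil_lt_add_one ht0.le).le
      linarith
    have hchain : Real.exp (c * t) * ζ ^ 2 / (8 * t ^ 5) ≤
        (Real.exp t / t ^ 4 / 2) / (2 * (2 * t)) * ζ ^ ((2:ℝ) * t + 2) := by
      have hrw : Real.exp t * ζ ^ ((2:ℝ) * t) = Real.exp (c * t) := by
        rw [Real.rpow_def_of_pos hζ0, ← Real.exp_add, hc]
        ring_nf
      have hsplit : ζ ^ ((2:ℝ) * t + 2) = ζ ^ ((2:ℝ) * t) * ζ ^ 2 := by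
        rw [Real.rpow_add hζ0]
        norm_num
      rw [hsplit, show (Real.exp t / t ^ 4 / 2) / (2 * (2 * t)) * (ζ ^ ((2:ℝ)*t) * ζ^2)
          = (Real.exp t * ζ ^ ((2:ℝ)*t)) * ζ^2 / (8 * t ^ 5) by
        field_simp; ring]
      rw [hrw]
    refine hchain.trans ?_
    have h6 : (Real.exp t / t ^ 4 / 2) / (2 * (2 * t)) ≤
        (⌊Real.exp t * (N : ℝ) ^ (-2 : ℤ)⌋₊ : ℝ) / (2 * (⌈t⌉₊ : ℝ)) := by
      apply div_le_div₀ (Nat.cast_nonneg _) hfl (by positivity)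
      linarith
    calc (Real.exp t / t ^ 4 / 2) / (2 * (2 * t)) * ζ ^ ((2:ℝ) * t + 2)
        ≤ (⌊Real.exp t * (N : ℝ) ^ (-2 : ℤ)⌋₊ : ℝ) / (2 * (⌈t⌉₊ : ℝ)) * ζ ^ ((2:ℝ) * t + 2) := by
          apply mul_le_mul_of_nonneg_right h6 (Real.rpow_nonneg hζ0.le _)
      _ ≤ r N * ζ ^ (2 * ⌈t⌉₊) := by
          apply mul_le_mul_of_nonneg_left hpow (hrnn N)
  -- Step 3: squeeze the power to 0
  have key : Tendsto (fun N : ℕ =>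
      ((1 : ℝ) - ζ ^ (2 * ⌈Real.sqrt N⌉₊)) ^ (r N)) atTop (nhds 0) := by
    have hub : Tendsto (fun N : ℕ =>
        Real.exp (-(r N * ζ ^ (2 * ⌈Real.sqrt N⌉₊)))) atTop (nhds 0) :=
      Real.tendsto_exp_atBot.comp (tendsto_neg_atTop_atBot.comp hprod)
    apply tendsto_of_tendsto_of_tendsto_of_le_of_le tendsto_const_nhds hub
    · intro N
      apply Real.rpow_nonneg
      have : ζ ^ (2 * ⌈Real.sqrt N⌉₊) ≤ 1 := pow_le_one₀ hζ0.le hζ1.le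
      linarith
    · intro N
      set k := 2 * ⌈Real.sqrt N⌉₊
      have hk1 : ζ ^ k ≤ 1 := pow_le_one₀ hζ0.le hζ1.le
      have hb1 : (1:ℝ) - ζ ^ k ≤ Real.exp (-(ζ ^ k)) := by
        have := Real.add_one_le_exp (-(ζ ^ k))
        linarith
      calc ((1:ℝ) - ζ ^ k) ^ (r N)
          ≤ (Real.exp (-(ζ ^ k))) ^ (r N) :=
            Real.rpow_le_rpow (by linarith) hb1 (hrnn N)
        _ = Real.exp (-(r N * ζ ^ k)) := by
            rw [← Real.exp_mul]; ring_nf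
  -- Step 4: conclude
  simpa [hr] using key.const_sub 1
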